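/- Fix α ∈ (0, 1/2) and set c := 2(1 − 2α)/ln((1−α)/α) (natural logarithm). Then for every f ∈ [0,1], c·(1 + h(f)) − 2f(1−f) ≤ c·(1 + h(α)) − 2α(1−α), where h is the binary entropy in nats (h measured so that h(1/2) = ln 2). Equivalently, the function f ↦ c·h(f) − 2f(1−f) on [0,1] attains its maximum at f = α. -/

import Mathlib

/-- The binary entropy function in nats, with `0 · ln 0 = 0`. -/
noncomputable def binEnt (p : ℝ) : ℝ :=
  -(p * Real.log p) - (1 - p) * Real.log (1 - p)


open Real Set

-- key inequality: for t ≥ 1, 2 log t ≤ t - 1/t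
lemma two_log_le (t : ℝ) (ht : 1 ≤ t) : 2 * Real.log t ≤ t - 1/t := by
  have ht0 : 0 < t := lt_of_lt_of_le one_pos ht
  have hx : 0 ≤ Real.log t := Real.log_nonneg ht
  have := (Real.self_le_sinh_iff).2 hx
  rw [Real.sinh_eq] at this
  rw [Real.exp_log ht0, ← Real.log_inv, Real.exp_log (by positivity)] at this
  rw [inv_eq_one_div] at this
  linarith

lemma log_sub_pos {x : ℝ} (hx : x ∈ Ioo (0:ℝ) (1/2)) :
    0 < Real.log (1 - x) - Real.log x := by
  obtain ⟨h0, h1⟩ := hx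
  have : Real.log x < Real.log (1 - x) := Real.log_lt_log h0 (by linarith)
  linarith

-- derivative of ψ
lemma psi_hasDeriv {x : ℝ} (hx : x ∈ Ioo (0:ℝ) (1/2)) :
    HasDerivAt (fun f : ℝ => (1 - 2*f) / (Real.log (1-f) - Real.log f))
      ((-2 * (Real.log (1-x) - Real.log x) - (1 - 2*x) * (-(1-x)⁻¹ - x⁻¹)) /
        (Real.log (1-x) - Real.log x) ^ 2) x := by
  have h0 := hx.1
  have h1 : x < 1/2 := hx.2
  have hD := log_sub_pos hx
  have hd1 : HasDerivAt (fun f : ℝ => 1 - 2*f) (-2) x := by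
    simpa using ((hasDerivAt_id x).const_mul (2:ℝ)).const_sub 1
  have hd2 : HasDerivAt (fun f : ℝ => Real.log (1-f) - Real.log f)
      (-(1-x)⁻¹ - x⁻¹) x := by
    have hl1 : HasDerivAt (fun f : ℝ => Real.log (1-f)) (-(1-x)⁻¹) x := by
      have := (Real.hasDerivAt_log (x := 1-x) (by linarith)).comp x
        ((hasDerivAt_id x).const_sub 1)
      simpa [Function.comp_def] using this
    exact hl1.sub (Real.hasDerivAt_log (ne_of_gt h0))
  exact hd1.div hd2 (ne_of_gt hD)

lemma psi_deriv_nonneg {x : ℝ} (hx : x ∈ Ioo (0:ℝ) (1/2)) :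
    0 ≤ (-2 * (Real.log (1-x) - Real.log x) - (1 - 2*x) * (-(1-x)⁻¹ - x⁻¹)) /
        (Real.log (1-x) - Real.log x) ^ 2 := by
  have h0 := hx.1
  have h1 : x < 1/2 := hx.2
  apply div_nonneg _ (sq_nonneg _)
  have key := two_log_le ((1-x)/x) (by rw [le_div_iff₀ h0]; linarith)
  rw [Real.log_div (by linarith) (ne_of_gt h0)] at key
  have hx0 : x ≠ 0 := ne_of_gt h0
  have h1x : (1:ℝ)-x ≠ 0 := by intro h; rw [sub_eq_zero] at h; linarith
  have e1 : (1-x)/x - 1/((1-x)/x) = (1-x)/x - x/(1-x) := by rw [one_div_div]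
  rw [e1] at key
  have e2 : (1 - 2*x) * (-(1-x)⁻¹ - x⁻¹) = -((1-2*x)/(x*(1-x))) := by
    field_simp; ring
  have e3 : (1-x)/x - x/(1-x) = (1-2*x)/(x*(1-x)) := by
    field_simp; ring
  rw [e3] at key
  rw [e2]
  linarith

lemma psi_mono : MonotoneOn (fun f : ℝ => (1 - 2*f) / (Real.log (1-f) - Real.log f))
    (Ioo (0:ℝ) (1/2)) := by
  apply monotoneOn_of_deriv_nonneg (convex_Ioo _ _)
  · exact fun x hx => ((psi_hasDeriv hx).continuousAt).continuousWithinAt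
  · intro x hx
    rw [interior_Ioo] at hx
    exact ((psi_hasDeriv hx).differentiableAt).differentiableWithinAt
  · intro x hx
    rw [interior_Ioo] at hx
    rw [(psi_hasDeriv hx).deriv]
    exact psi_deriv_nonneg hx


lemma mul_log_hasDeriv {x : ℝ} (hx : x ≠ 0) :
    HasDerivAt (fun p : ℝ => p * Real.log p) (Real.log x + 1) x := by
  have h := (hasDerivAt_id x).mul (Real.hasDerivAt_log hx)
  simp only [id_eq, one_mul] at h
  rwa [mul_inv_cancel₀ hx] at h

lemma binEnt_hasDeriv {x : ℝ} (h0 : 0 < x) (h1 : x < 1) :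
    HasDerivAt binEnt (Real.log (1-x) - Real.log x) x := by
  have d1 := mul_log_hasDeriv (ne_of_gt h0)
  have d2' := mul_log_hasDeriv (x := 1-x) (by intro h; rw [sub_eq_zero] at h; linarith)
  have d2 : HasDerivAt (fun p : ℝ => (1-p) * Real.log (1-p))
      (-(Real.log (1-x) + 1)) x := by
    have := d2'.comp x ((hasDerivAt_id x).const_sub 1)
    simpa [Function.comp_def] using this.congr_deriv (by ring)
  have := (d1.neg).sub d2
  exact this.congr_deriv (by ring)

lemma binEnt_continuous : Continuous binEnt := by
  have h := Real.continuous_mul_log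
  exact (h.neg).sub (h.comp (continuous_const.sub continuous_id))

lemma binEnt_symm (p : ℝ) : binEnt (1 - p) = binEnt p := by
  unfold binEnt; rw [sub_sub_cancel]; ring

/-- For `α ∈ (0,1/2)` and `c := 2(1−2α)/ln((1−α)/α)`, the function
`f ↦ c·h(f) − 2f(1−f)` on `[0,1]` attains its maximum at `f = α`. -/
theorem stmt_13 (α : ℝ) (hα : α ∈ Set.Ioo (0 : ℝ) (1 / 2))
    (c : ℝ) (hc : c = 2 * (1 - 2 * α) / Real.log ((1 - α) / α)) :
    ∀ f ∈ Set.Icc (0 : ℝ) 1,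
      c * binEnt f - 2 * f * (1 - f) ≤ c * binEnt α - 2 * α * (1 - α) := by
  obtain ⟨hα0, hα2⟩ := hα
  have hα1 : α < 1 := by linarith
  have hL : 0 < Real.log (1-α) - Real.log α := log_sub_pos ⟨hα0, hα2⟩
  have hc' : c = 2 * (1 - 2*α) / (Real.log (1-α) - Real.log α) := by
    rw [hc, Real.log_div (by linarith) (ne_of_gt hα0)]
  have hcpos : 0 < c := by
    rw [hc']; apply div_pos (by linarith) hL
  set F : ℝ → ℝ := fun f => c * binEnt f - 2*f*(1-f) with hF
  have hFd : ∀ x ∈ Ioo (0:ℝ) 1,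
      HasDerivAt F (c * (Real.log (1-x) - Real.log x) - (2 - 4*x)) x := by
    intro x hx
    have d1 := (binEnt_hasDeriv hx.1 hx.2).const_mul c
    have d2 : HasDerivAt (fun f : ℝ => 2*f*(1-f)) (2 - 4*x) x := by
      have := ((hasDerivAt_id x).const_mul (2:ℝ)).mul ((hasDerivAt_id x).const_sub 1)
      exact this.congr_deriv (by simp [id_eq]; ring)
    exact d1.sub d2
  -- derivative sign via ψ monotonicity
  have hψα : (1 - 2*α) / (Real.log (1-α) - Real.log α) = c / 2 := by
    rw [hc']; ring
  have hCont : Continuous F := by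
    exact (continuous_const.mul binEnt_continuous).sub (by fun_prop)
  have hmono : MonotoneOn F (Icc 0 α) := by
    apply monotoneOn_of_deriv_nonneg (convex_Icc _ _) hCont.continuousOn
    · intro x hx
      rw [interior_Icc] at hx
      exact ((hFd x ⟨hx.1, by linarith [hx.2]⟩).differentiableAt).differentiableWithinAt
    · intro x hx
      rw [interior_Icc] at hx
      have hx01 : x ∈ Ioo (0:ℝ) 1 := ⟨hx.1, by linarith [hx.2]⟩
      rw [(hFd x hx01).deriv]
      have hxh : x ∈ Ioo (0:ℝ) (1/2) := ⟨hx.1, by linarith [hx.2]⟩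
      have hDx := log_sub_pos hxh
      have := psi_mono hxh ⟨hα0, hα2⟩ (le_of_lt hx.2)
      dsimp only at this
      rw [hψα] at this
      rw [div_le_iff₀ hDx] at this
      nlinarith
  have hanti : AntitoneOn F (Icc α (1/2)) := by
    apply antitoneOn_of_deriv_nonpos (convex_Icc _ _) hCont.continuousOn
    · intro x hx
      rw [interior_Icc] at hx
      exact ((hFd x ⟨by linarith [hx.1], by linarith [hx.2]⟩).differentiableAt).differentiableWithinAt
    · intro x hx
      rw [interior_Icc] at hx
      have hx01 : x ∈ Ioo (0:ℝ) 1 := ⟨by linarith [hx.1], by linarith [hx.2]⟩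
      rw [(hFd x hx01).deriv]
      have hxh : x ∈ Ioo (0:ℝ) (1/2) := ⟨by linarith [hx.1], hx.2⟩
      have hDx := log_sub_pos hxh
      have := psi_mono ⟨hα0, hα2⟩ hxh (le_of_lt hx.1)
      dsimp only at this
      rw [hψα] at this
      rw [le_div_iff₀ hDx] at this
      nlinarith
  have hhalf : ∀ f ∈ Icc (0:ℝ) (1/2), F f ≤ F α := by
    intro f hf
    rcases le_total f α with h | h
    · exact hmono ⟨hf.1, h⟩ ⟨hf.1.trans h, le_refl α⟩ h
    · exact hanti ⟨le_refl α, le_of_lt hα2⟩ ⟨h, hf.2⟩ h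
  intro f hf
  show F f ≤ F α
  rcases le_total f (1/2) with h | h
  · exact hhalf f ⟨hf.1, h⟩
  · have hsym : F f = F (1 - f) := by
      simp only [hF]
      rw [binEnt_symm]
      ring
    rw [hsym]
    exact hhalf (1-f) ⟨by linarith [hf.2], by linarith⟩
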